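/- The ATT is identified by the weighting formula: τ^ATT := E[Y(1)−Y(0) | Z=1] = E[Z·Y]/E[Z] − E[(1−Z)·Y·e(λ)/(1−e(λ))]/E[(1−Z)·e(λ)/(1−e(λ))], under latent ignorability and overlap with P(Z=1) > 0. -/

import Mathlib

open MeasureTheory ProbabilityTheory
open scoped ENNReal NNReal

/-- Auxiliary lemma: the core weighting identities. -/
lemma att_aux {Ω : Type*} (G : MeasurableSpace Ω) [mΩ : MeasurableSpace Ω]
    [StandardBorelSpace Ω] {μ : Measure Ω} [IsProbabilityMeasure μ]
    (Z Y0 Y1 : Ω → ℝ) (hZ : ∀ ω, Z ω = 0 ∨ Z ω = 1)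
    (hZm : Measurable Z) (hY0m : Measurable Y0) (hY1m : Measurable Y1)
    (hle : G ≤ mΩ)
    (hCI : CondIndepFun G hle (fun ω => (Y0 ω, Y1 ω)) Z μ)
    (hov : ∀ᵐ ω ∂μ, 0 < (μ[Z|G]) ω ∧ (μ[Z|G]) ω < 1)
    (hZi : Integrable Z μ)
    (hint4' : Integrable (fun ω => (1 - Z ω) * ((μ[Z|G]) ω / (1 - (μ[Z|G]) ω))) μ) :
    (∫ ω, (1 - Z ω) * Y0 ω * ((μ[Z|G]) ω / (1 - (μ[Z|G]) ω)) ∂μ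
        = ∫ ω, Z ω * Y0 ω ∂μ)
      ∧ (∫ ω, (1 - Z ω) * ((μ[Z|G]) ω / (1 - (μ[Z|G]) ω)) ∂μ = ∫ ω, Z ω ∂μ) := by
  classical
  set e' : Ω → ℝ := μ[Z|G] with he'def
  have hesm : StronglyMeasurable[G] e' := stronglyMeasurable_condExp
  set w' : Ω → ℝ := fun ω => e' ω / (1 - e' ω) with hw'def
  have hw'mG : Measurable[G] w' :=
    hesm.measurable.div (measurable_const.sub hesm.measurable)
  have hwsm : StronglyMeasurable[G] w' := hw'mG.stronglyMeasurable
  have hw'm : Measurable w' := hw'mG.mono hle le_rfl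
  -- pointwise facts about Z
  have hZnn : ∀ ω, 0 ≤ Z ω := fun ω => by rcases hZ ω with h | h <;> rw [h] <;> norm_num
  have h1Znn : ∀ ω, 0 ≤ 1 - Z ω := fun ω => by rcases hZ ω with h | h <;> rw [h] <;> norm_num
  -- the condexp multiplication property from conditional independence
  have hmul := (condIndepFun_iff_condExp_inter_preimage_eq_mul
    (hY0m.prodMk hY1m) hZm).mp hCI
  -- conditional expectation of 1 - Z
  have hcondA0 : (μ⟦Z ⁻¹' {0} | G⟧) =ᵐ[μ] fun ω => 1 - e' ω := by
    have hind : Set.indicator (Z ⁻¹' {0}) (fun _ => (1:ℝ)) = (fun _ => (1:ℝ)) - Z := by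
      funext ω
      rcases hZ ω with h | h <;>
        simp [Set.indicator_apply, Set.mem_preimage, h]
    rw [hind]
    refine (condExp_sub (integrable_const 1) hZi G).trans ?_
    rw [condExp_const hle (1:ℝ)]
    exact Filter.EventuallyEq.rfl
  have hcondA1 : (μ⟦Z ⁻¹' {1} | G⟧) = e' := by
    have hind : Set.indicator (Z ⁻¹' {1}) (fun _ => (1:ℝ)) = Z := by
      funext ω
      rcases hZ ω with h | h <;>
        simp [Set.indicator_apply, Set.mem_preimage, h]
    rw [he'def, hind]
  -- KEY: indicator-level identity
  have key : ∀ s : Set ℝ, MeasurableSet s →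
      ∫ ω, (1 - Z ω) * Set.indicator s (fun _ => (1:ℝ)) (Y0 ω) * w' ω ∂μ
        = ∫ ω, Z ω * Set.indicator s (fun _ => (1:ℝ)) (Y0 ω) ∂μ := by
    intro s hs
    set B : Set Ω := (fun ω => (Y0 ω, Y1 ω)) ⁻¹' (s ×ˢ Set.univ) with hBdef
    have hBm : MeasurableSet B := (hY0m.prodMk hY1m) (hs.prod MeasurableSet.univ)
    have h0 := hmul (s ×ˢ Set.univ) {0} (hs.prod MeasurableSet.univ)
      (measurableSet_singleton 0)
    have h1 := hmul (s ×ˢ Set.univ) {1} (hs.prod MeasurableSet.univ)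
      (measurableSet_singleton 1)
    set q : Ω → ℝ := μ⟦B | G⟧ with hqdef
    have hind0 : ∀ ω, Set.indicator (B ∩ Z ⁻¹' {0}) (fun _ => (1:ℝ)) ω
        = (1 - Z ω) * Set.indicator s (fun _ => (1:ℝ)) (Y0 ω) := by
      intro ω
      rcases hZ ω with h | h <;> by_cases hmem : Y0 ω ∈ s <;>
        simp [Set.indicator_apply, hBdef, Set.mem_preimage, hmem, h]
    have hind1 : ∀ ω, Set.indicator (B ∩ Z ⁻¹' {1}) (fun _ => (1:ℝ)) ω
        = Z ω * Set.indicator s (fun _ => (1:ℝ)) (Y0 ω) := by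
      intro ω
      rcases hZ ω with h | h <;> by_cases hmem : Y0 ω ∈ s <;>
        simp [Set.indicator_apply, hBdef, Set.mem_preimage, hmem, h]
    set φ : Ω → ℝ := Set.indicator (B ∩ Z ⁻¹' {0}) (fun _ => (1:ℝ)) with hφdef
    set ψ : Ω → ℝ := Set.indicator (B ∩ Z ⁻¹' {1}) (fun _ => (1:ℝ)) with hψdef
    have hφi : Integrable φ μ :=
      (integrable_const (1:ℝ)).indicator (hBm.inter (hZm (measurableSet_singleton 0)))
    have hψi : Integrable ψ μ :=
      (integrable_const (1:ℝ)).indicator (hBm.inter (hZm (measurableSet_singleton 1)))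
    have hwφi : Integrable (w' * φ) μ := by
      refine hint4'.mono
        ((hw'm.aemeasurable.mul hφi.aestronglyMeasurable.aemeasurable).aestronglyMeasurable) ?_
      refine Filter.Eventually.of_forall fun ω => ?_
      show ‖w' ω * φ ω‖ ≤ ‖(1 - Z ω) * w' ω‖
      rw [hind0 ω]
      rcases hZ ω with h | h <;> by_cases hmem : Y0 ω ∈ s <;>
        simp [h, hmem, abs_mul]
    -- LHS computation
    have lhs1 : ∫ ω, (1 - Z ω) * Set.indicator s (fun _ => (1:ℝ)) (Y0 ω) * w' ω ∂μ
        = ∫ ω, (w' * φ) ω ∂μ := by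
      refine integral_congr_ae (Filter.Eventually.of_forall fun ω => ?_)
      show (1 - Z ω) * s.indicator (fun _ => (1:ℝ)) (Y0 ω) * w' ω = w' ω * φ ω
      rw [hind0 ω]; ring
    have lhs2 : ∫ ω, (w' * φ) ω ∂μ = ∫ ω, (μ[w' * φ|G]) ω ∂μ :=
      (integral_condExp hle).symm
    have hmulφ : μ[w' * φ|G] =ᵐ[μ] w' * μ[φ|G] :=
      condExp_mul_of_stronglyMeasurable_left hwsm hwφi hφi
    have hcondφ : μ[φ|G] =ᵐ[μ] fun ω => q ω * (1 - e' ω) := by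
      refine h0.trans ?_
      filter_upwards [hcondA0] with ω h
      rw [h]
    have lhs3 : ∫ ω, (μ[w' * φ|G]) ω ∂μ = ∫ ω, e' ω * q ω ∂μ := by
      refine integral_congr_ae ?_
      filter_upwards [hmulφ, hcondφ, hov] with ω h1' h2' h3'
      rw [h1']
      simp only [Pi.mul_apply, h2', hw'def]
      have hne : 1 - e' ω ≠ 0 := by linarith [h3'.2]
      field_simp
    -- RHS computation
    have rhs1 : ∫ ω, Z ω * Set.indicator s (fun _ => (1:ℝ)) (Y0 ω) ∂μ
        = ∫ ω, ψ ω ∂μ := by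
      refine integral_congr_ae (Filter.Eventually.of_forall fun ω => ?_)
      show Z ω * s.indicator (fun _ => (1:ℝ)) (Y0 ω) = ψ ω
      rw [hind1 ω]
    have rhs2 : ∫ ω, ψ ω ∂μ = ∫ ω, (μ[ψ|G]) ω ∂μ := (integral_condExp hle).symm
    have hcondψ : μ[ψ|G] =ᵐ[μ] fun ω => q ω * e' ω := by
      refine h1.trans ?_
      rw [hcondA1]
    have rhs3 : ∫ ω, (μ[ψ|G]) ω ∂μ = ∫ ω, e' ω * q ω ∂μ := by
      refine integral_congr_ae ?_
      filter_upwards [hcondψ] with ω h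
      rw [h]; ring
    rw [lhs1, lhs2, lhs3, rhs1, rhs2, rhs3]
  -- densities and pushforward measures
  set g0 : Ω → ℝ≥0 := fun ω => ((1 - Z ω) * w' ω).toNNReal with hg0def
  set g1 : Ω → ℝ≥0 := fun ω => (Z ω).toNNReal with hg1def
  have hg0m : Measurable g0 := ((measurable_const.sub hZm).mul hw'm).real_toNNReal
  have hg1m : Measurable g1 := hZm.real_toNNReal
  set ν0 : Measure Ω := μ.withDensity (fun ω => (g0 ω : ℝ≥0∞)) with hν0def
  set ν1 : Measure Ω := μ.withDensity (fun ω => (g1 ω : ℝ≥0∞)) with hν1def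
  have hw'nnae : ∀ᵐ ω ∂μ, 0 ≤ w' ω := by
    filter_upwards [hov] with ω h
    have hp : 0 < e' ω / (1 - e' ω) := div_pos h.1 (by linarith [h.2])
    simpa [hw'def] using hp.le
  have hmapeq : Measure.map Y0 ν0 = Measure.map Y0 ν1 := by
    ext s hs
    rw [Measure.map_apply hY0m hs, Measure.map_apply hY0m hs, hν0def, hν1def,
      withDensity_apply _ (hY0m hs), withDensity_apply _ (hY0m hs),
      ← lintegral_indicator (hY0m hs), ← lintegral_indicator (hY0m hs)]
    have hf0i : Integrable
        (fun ω => (1 - Z ω) * Set.indicator s (fun _ => (1:ℝ)) (Y0 ω) * w' ω) μ := by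
      refine hint4'.mono ?_ ?_
      · exact (((measurable_const.sub hZm).mul
          ((measurable_const.indicator hs).comp hY0m)).mul hw'm).aestronglyMeasurable
      · refine Filter.Eventually.of_forall fun ω => ?_
        show ‖(1 - Z ω) * s.indicator (fun _ => (1:ℝ)) (Y0 ω) * w' ω‖
          ≤ ‖(1 - Z ω) * (e' ω / (1 - e' ω))‖
        by_cases hmem : Y0 ω ∈ s
        · simp [hmem, abs_mul, hw'def]
        · rw [Set.indicator_of_notMem hmem]
          simp only [mul_zero, zero_mul, norm_zero]
          exact norm_nonneg _
    have hf1i : Integrable (fun ω => Z ω * Set.indicator s (fun _ => (1:ℝ)) (Y0 ω)) μ := by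
      refine hZi.mono ?_ ?_
      · exact (hZm.mul ((measurable_const.indicator hs).comp hY0m)).aestronglyMeasurable
      · refine Filter.Eventually.of_forall fun ω => ?_
        by_cases hmem : Y0 ω ∈ s <;> simp [hmem, abs_mul]
    have hf0nn : 0 ≤ᵐ[μ]
        fun ω => (1 - Z ω) * Set.indicator s (fun _ => (1:ℝ)) (Y0 ω) * w' ω := by
      filter_upwards [hw'nnae] with ω hw'nn
      by_cases hmem : Y0 ω ∈ s <;> simp [hmem, hw'nn, h1Znn ω, mul_nonneg]
    have hf1nn : 0 ≤ᵐ[μ] fun ω => Z ω * Set.indicator s (fun _ => (1:ℝ)) (Y0 ω) := by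
      refine Filter.Eventually.of_forall fun ω => ?_
      by_cases hmem : Y0 ω ∈ s <;> simp [hmem, hZnn ω]
    have l0 : ∫⁻ ω, (Y0 ⁻¹' s).indicator (fun ω => ((g0 ω : ℝ≥0∞))) ω ∂μ
        = ENNReal.ofReal
            (∫ ω, (1 - Z ω) * Set.indicator s (fun _ => (1:ℝ)) (Y0 ω) * w' ω ∂μ) := by
      rw [ofReal_integral_eq_lintegral_ofReal hf0i hf0nn]
      refine lintegral_congr fun ω => ?_
      by_cases hmem : Y0 ω ∈ s <;>
        simp [Set.indicator_apply, hmem, hg0def, ENNReal.ofReal]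
    have l1 : ∫⁻ ω, (Y0 ⁻¹' s).indicator (fun ω => ((g1 ω : ℝ≥0∞))) ω ∂μ
        = ENNReal.ofReal (∫ ω, Z ω * Set.indicator s (fun _ => (1:ℝ)) (Y0 ω) ∂μ) := by
      rw [ofReal_integral_eq_lintegral_ofReal hf1i hf1nn]
      refine lintegral_congr fun ω => ?_
      by_cases hmem : Y0 ω ∈ s <;>
        simp [Set.indicator_apply, hmem, hg1def, ENNReal.ofReal]
    rw [l0, l1, key s hs]
  -- transfer to Y0 integrals
  have hI0 : ∫ ω, (1 - Z ω) * Y0 ω * w' ω ∂μ = ∫ ω, Z ω * Y0 ω ∂μ := by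
    have a0 : ∫ y, y ∂(Measure.map Y0 ν0) = ∫ ω, (1 - Z ω) * Y0 ω * w' ω ∂μ := by
      rw [integral_map hY0m.aemeasurable measurable_id'.aestronglyMeasurable]
      rw [hν0def, integral_withDensity_eq_integral_smul hg0m]
      refine integral_congr_ae ?_
      filter_upwards [hw'nnae] with ω hw'nn
      have hnn : 0 ≤ (1 - Z ω) * w' ω := mul_nonneg (h1Znn ω) hw'nn
      simp only [hg0def, NNReal.smul_def, Real.coe_toNNReal _ hnn, smul_eq_mul]
      ring
    have a1 : ∫ y, y ∂(Measure.map Y0 ν1) = ∫ ω, Z ω * Y0 ω ∂μ := by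
      rw [integral_map hY0m.aemeasurable measurable_id'.aestronglyMeasurable]
      rw [hν1def, integral_withDensity_eq_integral_smul hg1m]
      refine integral_congr_ae (Filter.Eventually.of_forall fun ω => ?_)
      simp only [hg1def, NNReal.smul_def, Real.coe_toNNReal _ (hZnn ω), smul_eq_mul]
    rw [← a0, ← a1, hmapeq]
  have htot : ∫ ω, (1 - Z ω) * w' ω ∂μ = ∫ ω, Z ω ∂μ := by
    have hkk := key Set.univ MeasurableSet.univ
    simpa using hkk
  exact ⟨hI0, htot⟩

/-- ATT identification by weighting:
E[Y(1)−Y(0)|Z=1] = E[ZY]/E[Z] − E[(1−Z)·Y·e/(1−e)]/E[(1−Z)·e/(1−e)],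
where E[·|Z=1] is formalized as E[Z·(Y(1)−Y(0))]/E[Z]. -/
theorem att_identification
    {Ω : Type*} [mΩ : MeasurableSpace Ω] [StandardBorelSpace Ω]
    {μ : Measure Ω} [IsProbabilityMeasure μ]
    {r : ℕ} (lam : Ω → EuclideanSpace ℝ (Fin r)) (hlam : Measurable lam)
    (Z Y0 Y1 : Ω → ℝ) (hZ : ∀ ω, Z ω = 0 ∨ Z ω = 1)
    (hZm : Measurable Z) (hY0m : Measurable Y0) (hY1m : Measurable Y1)
    (Y : Ω → ℝ) (hY : ∀ ω, Y ω = Z ω * Y1 ω + (1 - Z ω) * Y0 ω)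
    (hle : MeasurableSpace.comap lam inferInstance ≤ mΩ)
    (hCI : CondIndepFun (MeasurableSpace.comap lam inferInstance) hle
      (fun ω => (Y0 ω, Y1 ω)) Z μ)
    (e : Ω → ℝ) (he : e =ᵐ[μ] μ[Z|MeasurableSpace.comap lam inferInstance])
    (hoverlap : ∀ᵐ ω ∂μ, 0 < e ω ∧ e ω < 1)
    (htreated : 0 < ∫ ω, Z ω ∂μ)
    (hZi : Integrable Z μ)
    (hint1 : Integrable (fun ω => Z ω * Y ω) μ)
    (hint2 : Integrable (fun ω => Z ω * (Y1 ω - Y0 ω)) μ)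
    (hint3 : Integrable (fun ω => (1 - Z ω) * Y ω * (e ω / (1 - e ω))) μ)
    (hint4 : Integrable (fun ω => (1 - Z ω) * (e ω / (1 - e ω))) μ)
    (hint5 : Integrable (fun ω => Y0 ω * (e ω / (1 - e ω))) μ) :
    (∫ ω, Z ω * (Y1 ω - Y0 ω) ∂μ) / (∫ ω, Z ω ∂μ)
      = (∫ ω, Z ω * Y ω ∂μ) / (∫ ω, Z ω ∂μ)
        - (∫ ω, (1 - Z ω) * Y ω * (e ω / (1 - e ω)) ∂μ)
          / (∫ ω, (1 - Z ω) * (e ω / (1 - e ω)) ∂μ) := by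
  have hov : ∀ᵐ ω ∂μ,
      0 < (μ[Z|MeasurableSpace.comap lam inferInstance]) ω
        ∧ (μ[Z|MeasurableSpace.comap lam inferInstance]) ω < 1 := by
    filter_upwards [hoverlap, he] with ω h1 h2
    rw [← h2]; exact h1
  have hwe : (fun ω => e ω / (1 - e ω)) =ᵐ[μ]
      fun ω => (μ[Z|MeasurableSpace.comap lam inferInstance]) ω
        / (1 - (μ[Z|MeasurableSpace.comap lam inferInstance]) ω) := by
    filter_upwards [he] with ω h
    rw [h]
  have hint4' : Integrable (fun ω => (1 - Z ω)
      * ((μ[Z|MeasurableSpace.comap lam inferInstance]) ω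
        / (1 - (μ[Z|MeasurableSpace.comap lam inferInstance]) ω))) μ := by
    refine hint4.congr ?_
    filter_upwards [hwe] with ω h
    rw [h]
  obtain ⟨hI0, htot⟩ := att_aux (MeasurableSpace.comap lam inferInstance)
    Z Y0 Y1 hZ hZm hY0m hY1m hle hCI hov hZi hint4'
  have hnum2 : ∫ ω, (1 - Z ω) * Y ω * (e ω / (1 - e ω)) ∂μ = ∫ ω, Z ω * Y0 ω ∂μ := by
    rw [← hI0]
    refine integral_congr_ae ?_
    filter_upwards [hwe] with ω h
    rw [h]
    rcases hZ ω with hz | hz <;> simp [hY ω, hz]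
  have hden2 : ∫ ω, (1 - Z ω) * (e ω / (1 - e ω)) ∂μ = ∫ ω, Z ω ∂μ := by
    rw [← htot]
    exact integral_congr_ae (by filter_upwards [hwe] with ω h; rw [h])
  have hZY0i : Integrable (fun ω => Z ω * Y0 ω) μ := by
    refine (hint1.sub hint2).congr (Filter.Eventually.of_forall fun ω => ?_)
    rcases hZ ω with hz | hz <;> simp [hY ω, hz] <;> ring
  have hnum1 : ∫ ω, Z ω * (Y1 ω - Y0 ω) ∂μ
      = (∫ ω, Z ω * Y ω ∂μ) - ∫ ω, Z ω * Y0 ω ∂μ := by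
    rw [← integral_sub hint1 hZY0i]
    refine integral_congr_ae (Filter.Eventually.of_forall fun ω => ?_)
    rcases hZ ω with hz | hz <;> simp [hY ω, hz] <;> ring
  rw [hnum1, hnum2, hden2, sub_div]
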